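/- Let (β,δ) lie in the polynomial regime 𝒫 and let 0 < ε < δ/2. Then, as N → ∞, the partial Green-function sum Σ_{n=⌈N^{1−δ/2}⌉}^{⌊N^{1−ε}⌋} G_N(⌈N^{1−δ/2}⌉, n) is o(N^{(1−β)/2}), i.e. N^{−(1−β)/2} · Σ_{n=⌈N^{1−δ/2}⌉}^{⌊N^{1−ε}⌋} G_N(⌈N^{1−δ/2}⌉, n) → 0. -/

import Mathlib

set_option maxHeartbeats 1000000

open Filter Finset

namespace MullerRatchet7

/-- Per-capita upward rate of the time-rescaled best-class process:
`p_n = (1/(2m) + 1/ρ)(1 − n/N)` with `m = N^{−β}`, `ρ = 1 − N^{−δ}`. -/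
noncomputable def pr (β δ : ℝ) (N n : ℕ) : ℝ :=
  (1 / (2 * (N:ℝ)^(-β)) + 1 / (1 - (N:ℝ)^(-δ))) * (1 - (n:ℝ)/(N:ℝ))

/-- Per-capita downward rate `q_n = (1/(2m))(1 − n/N) + 1` with `m = N^{−β}`. -/
noncomputable def qr (β : ℝ) (N n : ℕ) : ℝ :=
  (1 / (2 * (N:ℝ)^(-β))) * (1 - (n:ℝ)/(N:ℝ)) + 1

/-- Green function `G_N(n₀,n) = (1/(n q_n)) Σ_{l=0}^{min(n₀,n)−1} ∏_{k=l+1}^{n−1} p_k/q_k`. -/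
noncomputable def G (β δ : ℝ) (N n₀ n : ℕ) : ℝ :=
  (1 / ((n:ℝ) * qr β N n)) * ∑ l ∈ Finset.range (min n₀ n),
    ∏ k ∈ Finset.Icc (l+1) (n-1), pr β δ N k / qr β N k

private lemma geom_le (r : ℝ) (h0 : 0 ≤ r) (h1 : r < 1) (T : ℕ) :
    ∑ i ∈ range T, r ^ i ≤ 1 / (1 - r) := by
  have h := geom_sum_mul r T
  have hrT : (0:ℝ) ≤ r ^ T := pow_nonneg h0 T
  rw [le_div_iff₀ (by linarith)]
  nlinarith

private lemma inv_one_sub_exp_neg_le (c : ℝ) (hc0 : 0 < c) (hc1 : c ≤ 1) :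
    1/(1 - Real.exp (-c)) ≤ 2/c := by
  have h1 : c + 1 ≤ Real.exp c := Real.add_one_le_exp c
  have h2 : Real.exp (-c) ≤ 1/(1+c) := by
    rw [Real.exp_neg, inv_eq_one_div]
    exact one_div_le_one_div_of_le (by linarith) (by linarith)
  have h4 : 1/(1+c) ≤ 1 - c/2 := by
    rw [div_le_iff₀ (by linarith : (0:ℝ) < 1+c)]
    nlinarith
  have h3 : c/2 ≤ 1 - Real.exp (-c) := by linarith
  rw [div_le_div_iff₀ (by linarith) hc0]
  linarith

private lemma key (β δ ε : ℝ)
    (hβ0 : 0 < β) (hβ1 : β < 1)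
    (hδ1 : (1 - β)/2 < δ) (hδ2 : δ < 1 - β)
    (hε0 : 0 < ε) (hε1 : ε < δ/2)
    (N : ℕ) (hx2 : 2 ≤ (N:ℝ)) (hxδ : 2 ≤ (N:ℝ)^δ) (hxε : 2 ≤ (N:ℝ)^ε)
    (hxβ : 2 ≤ (N:ℝ)^β) (hxδ2 : 2 ≤ (N:ℝ)^(δ/2)) (hxA : 8 ≤ (N:ℝ)^(2*δ+β-1)) :
    0 ≤ (∑ n ∈ Finset.Icc ⌈(N:ℝ)^(1 - δ/2)⌉₊ ⌊(N:ℝ)^(1 - ε)⌋₊,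
            G β δ N ⌈(N:ℝ)^(1 - δ/2)⌉₊ n) ∧
    (∑ n ∈ Finset.Icc ⌈(N:ℝ)^(1 - δ/2)⌉₊ ⌊(N:ℝ)^(1 - ε)⌋₊,
            G β δ N ⌈(N:ℝ)^(1 - δ/2)⌉₊ n) ≤ 48 * (N:ℝ)^(δ/2) := by
  set x : ℝ := (N:ℝ) with hxdef
  have hx0 : (0:ℝ) < x := by linarith
  have hx1 : (1:ℝ) ≤ x := by linarith
  set n₀ : ℕ := ⌈x^(1 - δ/2)⌉₊ with hn₀def
  set M : ℕ := ⌊x^(1 - ε)⌋₊ with hMdef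
  set K : ℕ := ⌊x^(1 - δ)⌋₊ with hKdef
  have hn₀1 : 1 ≤ n₀ := Nat.one_le_iff_ne_zero.mpr (by
    simp only [hn₀def, ← Nat.pos_iff_ne_zero, Nat.ceil_pos]
    exact Real.rpow_pos_of_pos hx0 _)
  have hn₀x : x^(1 - δ/2) ≤ (n₀:ℝ) := Nat.le_ceil _
  have hn₀up : (n₀:ℝ) ≤ x^(1 - δ/2) + 1 :=
    (Nat.ceil_lt_add_one (Real.rpow_nonneg hx0.le _)).le
  have hMx : (M:ℝ) ≤ x^(1 - ε) := Nat.floor_le (Real.rpow_nonneg hx0.le _)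
  have hKx : (K:ℝ) ≤ x^(1 - δ) := Nat.floor_le (Real.rpow_nonneg hx0.le _)
  have hKn₀ : K < n₀ := by
    have h1 : x^(1-δ) < x^(1-δ/2) := Real.rpow_lt_rpow_of_exponent_lt (by linarith) (by linarith)
    exact_mod_cast (hKx.trans_lt (h1.trans_le hn₀x))
  have hxβ0 : (0:ℝ) < x^β := Real.rpow_pos_of_pos hx0 _
  -- rewrite of 1/(2 x^{-β})
  have hpow : (1:ℝ)/(2*x^(-β)) = x^β/2 := by
    rw [Real.rpow_neg hx0.le]
    field_simp
  -- ρ bounds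
  have hρsmall : x^(-δ) ≤ 1/2 := by
    rw [Real.rpow_neg hx0.le]
    rw [inv_le_comm₀ (by positivity) (by norm_num)]
    simpa using hxδ
  have hρ0 : (0:ℝ) < 1 - x^(-δ) := by linarith
  -- per-k bounds, for k with (k:ℝ) ≤ x^(1-ε)
  have hfrac : ∀ k : ℕ, (k:ℝ) ≤ x^(1-ε) → 1/2 ≤ 1 - (k:ℝ)/x := by
    intro k hk
    have h1 : x^(1-ε) = x * x^(-ε) := by
      rw [show (1:ℝ)-ε = 1 + -ε by ring, Real.rpow_add hx0, Real.rpow_one]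
    have h2 : x^(-ε) ≤ 1/2 := by
      rw [Real.rpow_neg hx0.le]
      rw [inv_le_comm₀ (by positivity) (by norm_num)]
      simpa using hxε
    have h3 : (k:ℝ)/x ≤ x^(-ε) := by
      rw [div_le_iff₀ hx0]
      calc (k:ℝ) ≤ x^(1-ε) := hk
        _ = x^(-ε) * x := by rw [h1]; ring
    linarith
  have hqr_lb : ∀ k : ℕ, (k:ℝ) ≤ x^(1-ε) → x^β/4 ≤ qr β N k := by
    intro k hk
    have h := hfrac k hk
    simp only [qr, ← hxdef, hpow]
    nlinarith
  have hqr1 : ∀ k : ℕ, (k:ℝ) ≤ x^(1-ε) → 1 ≤ qr β N k := by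
    intro k hk
    have h := hfrac k hk
    simp only [qr, ← hxdef, hpow]
    nlinarith
  have hqr_ub : ∀ k : ℕ, (k:ℝ) ≤ x^(1-ε) → qr β N k ≤ x^β := by
    intro k hk
    have h := hfrac k hk
    have h2 : 1 - (k:ℝ)/x ≤ 1 := by
      have : (0:ℝ) ≤ (k:ℝ)/x := by positivity
      linarith
    simp only [qr, ← hxdef, hpow]
    nlinarith
  have hpr0 : ∀ k : ℕ, (k:ℝ) ≤ x^(1-ε) → 0 ≤ pr β δ N k := by
    intro k hk
    have h := hfrac k hk
    simp only [pr, ← hxdef, hpow]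
    have h1 : (0:ℝ) < 1/(1-x^(-δ)) := one_div_pos.mpr hρ0
    apply mul_nonneg <;> linarith
  have hratio0 : ∀ k : ℕ, (k:ℝ) ≤ x^(1-ε) → 0 ≤ pr β δ N k / qr β N k := by
    intro k hk
    exact div_nonneg (hpr0 k hk) (by linarith [hqr1 k hk])
  -- ratio identity
  have hid : ∀ k : ℕ, (k:ℝ) ≤ x^(1-ε) →
      pr β δ N k / qr β N k = 1 + (x^(-δ) - (k:ℝ)/x)/((1-x^(-δ)) * qr β N k) := by
    intro k hk
    have hq1 := hqr1 k hk
    have hq0 : qr β N k ≠ 0 := by linarith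
    have hρ : (1:ℝ) - x^(-δ) ≠ 0 := ne_of_gt hρ0
    have hd : pr β δ N k - qr β N k = (x^(-δ) - (k:ℝ)/x)/(1-x^(-δ)) := by
      simp only [pr, qr, ← hxdef, hpow]
      field_simp
      ring
    have h2 : pr β δ N k / qr β N k = 1 + (pr β δ N k - qr β N k)/qr β N k := by
      field_simp
      ring
    rw [h2, hd, div_div]
  -- constants
  set B : ℝ := 8 * x^(-δ) / x^β with hBdef
  set c : ℝ := (n₀:ℝ)/(2*(x*x^β)) with hcdef
  have hB0 : 0 ≤ B := by
    rw [hBdef]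
    positivity
  have hn₀0R : (0:ℝ) < (n₀:ℝ) := by exact_mod_cast hn₀1
  have hc0 : 0 < c := by
    rw [hcdef]
    positivity
  have hc1 : c ≤ 1 := by
    have h1 : x^(1-δ/2) ≤ x := by
      calc x^(1-δ/2) ≤ x^(1:ℝ) := Real.rpow_le_rpow_of_exponent_le hx1 (by linarith)
        _ = x := Real.rpow_one x
    have h2 : (n₀:ℝ) ≤ x + 1 := by linarith
    rw [hcdef, div_le_one (by positivity)]
    nlinarith
  -- pointwise bound on the correction term
  have hv : ∀ k : ℕ, (k:ℝ) ≤ x^(1-ε) →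
      (x^(-δ) - (k:ℝ)/x)/((1-x^(-δ)) * qr β N k)
        ≤ (if k ≤ K then B else 0) + (if n₀ ≤ k then -c else 0) := by
    intro k hkx
    have hD_lb : x^β/8 ≤ (1-x^(-δ)) * qr β N k := by
      calc x^β/8 = (1/2)*(x^β/4) := by ring
        _ ≤ (1-x^(-δ)) * qr β N k :=
            mul_le_mul (by linarith) (hqr_lb k hkx) (by positivity) (by linarith)
    have hD0 : 0 < (1-x^(-δ)) * qr β N k := lt_of_lt_of_le (by positivity) hD_lb
    by_cases hkK : k ≤ K
    · have hno : ¬ (n₀ ≤ k) := by omega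
      simp only [if_pos hkK, if_neg hno, add_zero]
      by_cases hu : x^(-δ) - (k:ℝ)/x ≤ 0
      · exact le_trans (div_nonpos_of_nonpos_of_nonneg hu hD0.le) hB0
      · rw [hBdef]
        have hkx0 : (0:ℝ) ≤ (k:ℝ)/x := by positivity
        calc (x^(-δ) - (k:ℝ)/x)/((1-x^(-δ)) * qr β N k)
            ≤ x^(-δ)/(x^β/8) :=
              div_le_div₀ (Real.rpow_nonneg hx0.le _) (by linarith) (by positivity) hD_lb
          _ = 8*x^(-δ)/x^β := by ring
    · have hkK' : K < k := Nat.lt_of_not_le hkK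
      have hxk1 : x^(1-δ) < (k:ℝ) := by
        have h1 : x^(1-δ) < (K:ℝ) + 1 := Nat.lt_floor_add_one _
        have h2 : (K:ℝ) + 1 ≤ (k:ℝ) := by exact_mod_cast hkK'
        linarith
      have hu0 : x^(-δ) ≤ (k:ℝ)/x := by
        rw [le_div_iff₀ hx0]
        calc x^(-δ)*x = x^(1-δ) := by
              rw [show (1:ℝ)-δ = -δ + 1 by ring, Real.rpow_add hx0, Real.rpow_one]
          _ ≤ (k:ℝ) := hxk1.le
      by_cases hkn : n₀ ≤ k
      · simp only [if_neg hkK, if_pos hkn, zero_add]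
        have h3 : 2*x*x^(-δ) ≤ (n₀:ℝ) := by
          have e1 : 2*x*x^(-δ) = 2*x^(1-δ) := by
            rw [show (1:ℝ)-δ = 1 + -δ by ring, Real.rpow_add hx0, Real.rpow_one]
            ring
          have e2 : x^(1-δ/2) = x^(1-δ)*x^(δ/2) := by
            rw [← Real.rpow_add hx0]
            congr 1
            ring
          have h4 : 2*x^(1-δ) ≤ x^(1-δ/2) := by
            rw [e2]
            nlinarith [Real.rpow_pos_of_pos hx0 (1-δ)]
          linarith [hn₀x]
        have hnum : x^(-δ) - (k:ℝ)/x ≤ -((n₀:ℝ)/(2*x)) := by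
          have h2 : (n₀:ℝ) ≤ (k:ℝ) := by exact_mod_cast hkn
          have h4 : (n₀:ℝ)/x ≤ (k:ℝ)/x := (div_le_div_iff_of_pos_right hx0).mpr h2
          have h5 : x^(-δ) ≤ (n₀:ℝ)/(2*x) := by
            rw [le_div_iff₀ (by positivity)]
            nlinarith
          have h6 : (n₀:ℝ)/(2*x) - (n₀:ℝ)/x = -((n₀:ℝ)/(2*x)) := by
            field_simp
            ring
          linarith
        have hDub : (1-x^(-δ)) * qr β N k ≤ x^β := by
          have hu1 := hqr_ub k hkx
          have hu2 := hqr1 k hkx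
          have hu3 : (0:ℝ) ≤ x^(-δ) := Real.rpow_nonneg hx0.le _
          nlinarith
        calc (x^(-δ) - (k:ℝ)/x)/((1-x^(-δ)) * qr β N k)
            ≤ (-((n₀:ℝ)/(2*x)))/((1-x^(-δ)) * qr β N k) := by
              exact (div_le_div_iff_of_pos_right hD0).mpr hnum
          _ ≤ (-((n₀:ℝ)/(2*x)))/x^β := by
              rw [div_le_div_iff₀ hD0 hxβ0]
              have h7 : (0:ℝ) ≤ (n₀:ℝ)/(2*x) := by positivity
              nlinarith [mul_le_mul_of_nonneg_left hDub h7]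
          _ = -c := by
              rw [hcdef, neg_div, div_div]
              ring_nf
      · simp only [if_neg hkK, if_neg hkn, add_zero]
        exact div_nonpos_of_nonpos_of_nonneg (by linarith) hD0.le
  have hexp3 : Real.exp 1 ≤ 3 := by
    have h := Real.exp_one_lt_d9
    norm_num at h
    linarith
  set r : ℝ := Real.exp (-c) with hrdef
  have hr0 : 0 ≤ r := (Real.exp_pos _).le
  have hr1 : r < 1 := by
    rw [hrdef, Real.exp_lt_one_iff]
    linarith
  -- bound on each Green function term
  have hGbound : ∀ n ∈ Finset.Icc n₀ M, G β δ N n₀ n ≤ 12 / x^β * r^(n - n₀) := by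
    intro n hn
    rw [Finset.mem_Icc] at hn
    obtain ⟨hn₀n, hnM⟩ := hn
    have hnR : (n:ℝ) ≤ x^(1-ε) := le_trans (Nat.cast_le.mpr hnM) hMx
    have hn1 : 1 ≤ n := le_trans hn₀1 hn₀n
    have hkmem : ∀ l, ∀ k ∈ Finset.Icc (l+1) (n-1), (k:ℝ) ≤ x^(1-ε) := by
      intro l k hk
      rw [Finset.mem_Icc] at hk
      have hkM : k ≤ M := le_trans hk.2 (le_trans (Nat.sub_le n 1) hnM)
      exact le_trans (Nat.cast_le.mpr hkM) hMx
    have hprod : ∀ l ∈ Finset.range n₀,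
        (∏ k ∈ Finset.Icc (l+1) (n-1), pr β δ N k / qr β N k) ≤ Real.exp 1 * r^(n-n₀) := by
      intro l hl
      rw [Finset.mem_range] at hl
      have step1 : (∏ k ∈ Finset.Icc (l+1) (n-1), pr β δ N k / qr β N k)
          ≤ ∏ k ∈ Finset.Icc (l+1) (n-1),
              Real.exp ((if k ≤ K then B else 0) + (if n₀ ≤ k then -c else 0)) := by
        apply Finset.prod_le_prod
        · intro k hk
          exact hratio0 k (hkmem l k hk)
        · intro k hk
          have hkx := hkmem l k hk
          rw [hid k hkx]
          refine le_trans ?_ (Real.exp_le_exp.mpr (hv k hkx))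
          linarith [Real.add_one_le_exp ((x^(-δ) - (k:ℝ)/x)/((1-x^(-δ)) * qr β N k))]
      have hsum : (∑ k ∈ Finset.Icc (l+1) (n-1),
            ((if k ≤ K then B else 0) + (if n₀ ≤ k then -c else 0)))
          ≤ 1 - ((n - n₀ : ℕ):ℝ) * c := by
        rw [Finset.sum_add_distrib]
        have hpart1 : (∑ k ∈ Finset.Icc (l+1) (n-1), (if k ≤ K then B else 0)) ≤ 1 := by
          rw [← Finset.sum_filter]
          have hsub : (Finset.Icc (l+1) (n-1)).filter (· ≤ K) ⊆ Finset.Icc 1 K := by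
            intro k hk
            simp only [Finset.mem_filter, Finset.mem_Icc] at hk ⊢
            omega
          have e1 : x^(1-δ) * x^(-δ) = x^(1-2*δ) := by
            rw [← Real.rpow_add hx0]
            congr 1
            ring
          have e2 : x^(2*δ+β-1) * x^(1-2*δ) = x^β := by
            rw [← Real.rpow_add hx0]
            congr 1
            ring
          calc (∑ k ∈ (Finset.Icc (l+1) (n-1)).filter (· ≤ K), B)
              ≤ ∑ k ∈ Finset.Icc 1 K, B :=
                Finset.sum_le_sum_of_subset_of_nonneg hsub (fun _ _ _ => hB0)
            _ = (K:ℝ) * B := by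
                rw [Finset.sum_const, Nat.card_Icc, nsmul_eq_mul]
                norm_num
            _ ≤ x^(1-δ) * B := mul_le_mul_of_nonneg_right hKx hB0
            _ ≤ 1 := by
                rw [hBdef]
                have e3 : x^(1-δ) * (8 * x^(-δ) / x^β) = 8*(x^(1-δ)*x^(-δ))/x^β := by
                  ring
                rw [e3, e1, div_le_one hxβ0]
                nlinarith [Real.rpow_pos_of_pos hx0 (1-2*δ)]
        have hpart2 : (∑ k ∈ Finset.Icc (l+1) (n-1), (if n₀ ≤ k then -c else 0))
            = ((n-n₀:ℕ):ℝ) * (-c) := by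
          rw [← Finset.sum_filter]
          have hfil : (Finset.Icc (l+1) (n-1)).filter (fun k => n₀ ≤ k) = Finset.Icc n₀ (n-1) := by
            ext k
            simp only [Finset.mem_filter, Finset.mem_Icc]
            omega
          rw [hfil, Finset.sum_const, Nat.card_Icc, nsmul_eq_mul]
          have : n - 1 + 1 - n₀ = n - n₀ := by omega
          rw [this]
        rw [hpart2]
        push_cast
        linarith [hpart1]
      have hexp_eq : Real.exp (1 - ((n-n₀:ℕ):ℝ)*c) = Real.exp 1 * r^(n-n₀) := by
        rw [hrdef, ← Real.exp_nat_mul, ← Real.exp_add]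
        congr 1
        ring
      calc (∏ k ∈ Finset.Icc (l+1) (n-1), pr β δ N k / qr β N k)
          ≤ ∏ k ∈ Finset.Icc (l+1) (n-1),
              Real.exp ((if k ≤ K then B else 0) + (if n₀ ≤ k then -c else 0)) := step1
        _ = Real.exp (∑ k ∈ Finset.Icc (l+1) (n-1),
              ((if k ≤ K then B else 0) + (if n₀ ≤ k then -c else 0))) :=
            (Real.exp_sum _ _).symm
        _ ≤ Real.exp (1 - ((n-n₀:ℕ):ℝ)*c) := Real.exp_le_exp.mpr hsum
        _ = Real.exp 1 * r^(n-n₀) := hexp_eq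
    have hsum_l : (∑ l ∈ Finset.range n₀, ∏ k ∈ Finset.Icc (l+1) (n-1), pr β δ N k / qr β N k)
        ≤ (n₀:ℝ) * (Real.exp 1 * r^(n-n₀)) := by
      calc (∑ l ∈ Finset.range n₀, ∏ k ∈ Finset.Icc (l+1) (n-1), pr β δ N k / qr β N k)
          ≤ (Finset.range n₀).card • (Real.exp 1 * r^(n-n₀)) :=
            Finset.sum_le_card_nsmul _ _ _ hprod
        _ = (n₀:ℝ) * (Real.exp 1 * r^(n-n₀)) := by
            rw [Finset.card_range, nsmul_eq_mul]
    have hq_lb := hqr_lb n hnR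
    have hq1 := hqr1 n hnR
    have hn0R : (0:ℝ) < (n:ℝ) := Nat.cast_pos.mpr (by omega)
    have hnq0 : (0:ℝ) < (n:ℝ) * qr β N n := mul_pos hn0R (by linarith)
    have hGdef : G β δ N n₀ n = (1/((n:ℝ) * qr β N n)) *
        ∑ l ∈ Finset.range n₀, ∏ k ∈ Finset.Icc (l+1) (n-1), pr β δ N k / qr β N k := by
      rw [G, min_eq_left hn₀n]
    have hkey : (n₀:ℝ) * Real.exp 1 / ((n:ℝ) * qr β N n) ≤ 12/x^β := by
      rw [div_le_div_iff₀ hnq0 hxβ0]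
      have hn₀n' : (n₀:ℝ) ≤ (n:ℝ) := Nat.cast_le.mpr hn₀n
      calc (n₀:ℝ) * Real.exp 1 * x^β ≤ ((n:ℝ) * 3) * x^β := by
            apply mul_le_mul_of_nonneg_right _ hxβ0.le
            exact mul_le_mul hn₀n' hexp3 (Real.exp_pos 1).le hn0R.le
        _ ≤ 12 * ((n:ℝ) * qr β N n) := by
            have h := mul_le_mul_of_nonneg_left hq_lb hn0R.le
            linarith
    calc G β δ N n₀ n = (1/((n:ℝ) * qr β N n)) *
          ∑ l ∈ Finset.range n₀, ∏ k ∈ Finset.Icc (l+1) (n-1), pr β δ N k / qr β N k := hGdef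
      _ ≤ (1/((n:ℝ) * qr β N n)) * ((n₀:ℝ) * (Real.exp 1 * r^(n-n₀))) :=
          mul_le_mul_of_nonneg_left hsum_l (by positivity)
      _ = ((n₀:ℝ) * Real.exp 1 / ((n:ℝ) * qr β N n)) * r^(n-n₀) := by ring
      _ ≤ 12/x^β * r^(n-n₀) :=
          mul_le_mul_of_nonneg_right hkey (pow_nonneg hr0 _)
  -- nonnegativity
  have hnonneg : 0 ≤ ∑ n ∈ Finset.Icc n₀ M, G β δ N n₀ n := by
    apply Finset.sum_nonneg
    intro n hn
    rw [Finset.mem_Icc] at hn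
    have hnR : (n:ℝ) ≤ x^(1-ε) := le_trans (Nat.cast_le.mpr hn.2) hMx
    have hq1 := hqr1 n hnR
    rw [G]
    apply mul_nonneg
    · apply one_div_nonneg.mpr
      apply mul_nonneg (Nat.cast_nonneg n)
      linarith
    · apply Finset.sum_nonneg
      intro l hl
      apply Finset.prod_nonneg
      intro k hk
      rw [Finset.mem_Icc] at hk
      have hkM : k ≤ M := le_trans hk.2 (le_trans (Nat.sub_le n 1) hn.2)
      exact hratio0 k (le_trans (Nat.cast_le.mpr hkM) hMx)
  refine ⟨hnonneg, ?_⟩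
  -- sum the geometric bound
  have hgeom : (∑ n ∈ Finset.Icc n₀ M, r^(n-n₀)) ≤ 1/(1-r) := by
    have e : (∑ n ∈ Finset.Icc n₀ M, r^(n-n₀)) = ∑ i ∈ Finset.range (M+1-n₀), r^i := by
      rw [← Finset.Ico_add_one_right_eq_Icc, Finset.sum_Ico_eq_sum_range]
      apply Finset.sum_congr rfl
      intro i _
      congr 1
      omega
    rw [e]
    exact geom_le r hr0 hr1 _
  have hrc : 1/(1-r) ≤ 2/c := by
    rw [hrdef]
    exact inv_one_sub_exp_neg_le c hc0 hc1
  have hfinal : 12/x^β * (1/(1-r)) ≤ 48 * x^(δ/2) := by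
    have h1 : 12/x^β * (1/(1-r)) ≤ 12/x^β * (2/c) := by
      apply mul_le_mul_of_nonneg_left hrc (by positivity)
    have h2 : 12/x^β * (2/c) = 48*x/(n₀:ℝ) := by
      rw [hcdef]
      field_simp
      ring
    have h3 : 48*x/(n₀:ℝ) ≤ 48*x/x^(1-δ/2) := by
      apply div_le_div_of_nonneg_left (by positivity) (Real.rpow_pos_of_pos hx0 _) hn₀x
    have h4 : 48*x/x^(1-δ/2) = 48*x^(δ/2) := by
      rw [eq_comm, eq_div_iff (ne_of_gt (Real.rpow_pos_of_pos hx0 _))]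
      rw [mul_assoc, ← Real.rpow_add hx0]
      norm_num
    linarith
  calc (∑ n ∈ Finset.Icc n₀ M, G β δ N n₀ n)
      ≤ ∑ n ∈ Finset.Icc n₀ M, 12/x^β * r^(n-n₀) := Finset.sum_le_sum hGbound
    _ = 12/x^β * ∑ n ∈ Finset.Icc n₀ M, r^(n-n₀) := by rw [Finset.mul_sum]
    _ ≤ 12/x^β * (1/(1-r)) := mul_le_mul_of_nonneg_left hgeom (by positivity)
    _ ≤ 48 * x^(δ/2) := hfinal

/-- In the polynomial regime `𝒫`, for `0 < ε < δ/2`,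
`Σ_{n=⌈N^{1−δ/2}⌉}^{⌊N^{1−ε}⌋} G_N(⌈N^{1−δ/2}⌉, n) = o(N^{(1−β)/2})`. -/
theorem statement7 (β δ ε : ℝ)
    (hβ0 : 0 < β) (hβ1 : β < 1)
    (hδ1 : (1 - β)/2 < δ) (hδ2 : δ < 1 - β)
    (hε0 : 0 < ε) (hε1 : ε < δ/2) :
    Tendsto (fun N : ℕ =>
        (N:ℝ)^(-((1 - β)/2)) *
          ∑ n ∈ Finset.Icc ⌈(N:ℝ)^(1 - δ/2)⌉₊ ⌊(N:ℝ)^(1 - ε)⌋₊,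
            G β δ N ⌈(N:ℝ)^(1 - δ/2)⌉₊ n)
      atTop (nhds 0) := by
  have hδ0 : 0 < δ := by linarith
  have hγ0 : 0 < (1-β)/2 - δ/2 := by linarith
  have hnat : Tendsto (fun N : ℕ => (N:ℝ)) atTop atTop := tendsto_natCast_atTop_atTop
  have hev : ∀ (C a : ℝ), 0 < a → ∀ᶠ N : ℕ in atTop, C ≤ (N:ℝ)^a := by
    intro C a ha
    exact ((tendsto_rpow_atTop ha).comp hnat).eventually_ge_atTop C
  have htend : Tendsto (fun N : ℕ => 48 * (N:ℝ)^(-((1-β)/2 - δ/2))) atTop (nhds 0) := by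
    have h := ((tendsto_rpow_neg_atTop hγ0).comp hnat).const_mul (48:ℝ)
    simpa using h
  refine tendsto_of_tendsto_of_tendsto_of_le_of_le' tendsto_const_nhds htend ?_ ?_
  · filter_upwards [hnat.eventually_ge_atTop 2, hev 2 δ hδ0, hev 2 ε hε0, hev 2 β hβ0,
      hev 2 (δ/2) (half_pos hδ0), hev 8 (2*δ+β-1) (by linarith)] with N h1 h2 h3 h4 h5 h6
    have hk := key β δ ε hβ0 hβ1 hδ1 hδ2 hε0 hε1 N h1 h2 h3 h4 h5 h6
    have h0 : (0:ℝ) ≤ (N:ℝ)^(-((1 - β)/2)) := Real.rpow_nonneg (Nat.cast_nonneg N) _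
    exact mul_nonneg h0 hk.1
  · filter_upwards [hnat.eventually_ge_atTop 2, hev 2 δ hδ0, hev 2 ε hε0, hev 2 β hβ0,
      hev 2 (δ/2) (half_pos hδ0), hev 8 (2*δ+β-1) (by linarith)] with N h1 h2 h3 h4 h5 h6
    obtain ⟨hpos, hub⟩ := key β δ ε hβ0 hβ1 hδ1 hδ2 hε0 hε1 N h1 h2 h3 h4 h5 h6
    have hx0 : (0:ℝ) < (N:ℝ) := by linarith
    have h0 : (0:ℝ) ≤ (N:ℝ)^(-((1 - β)/2)) := Real.rpow_nonneg hx0.le _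
    calc (N:ℝ)^(-((1 - β)/2)) *
          (∑ n ∈ Finset.Icc ⌈(N:ℝ)^(1 - δ/2)⌉₊ ⌊(N:ℝ)^(1 - ε)⌋₊,
            G β δ N ⌈(N:ℝ)^(1 - δ/2)⌉₊ n)
        ≤ (N:ℝ)^(-((1 - β)/2)) * (48 * (N:ℝ)^(δ/2)) := mul_le_mul_of_nonneg_left hub h0
      _ = 48 * (N:ℝ)^(-((1-β)/2 - δ/2)) := by
          rw [show -((1-β)/2 - δ/2) = -((1 - β)/2) + δ/2 by ring, Real.rpow_add hx0]
          ring

end MullerRatchet7
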